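/- Let c > 0 and β ∈ (0,1). Let V : [0,∞) → ℝ be a differentiable function with V(t) ≥ 0 for all t ≥ 0, satisfying V'(t) ≤ V(t) - c·V(t)^β for all t ≥ 0 with V(t) > 0. If V(0)^(1-β) < c, then there exists a finite T ≥ 0 such that V(t) = 0 for all t ≥ T. -/

import Mathlib

open Set

/-- Where `V` is positive, below the level `c`, and the differential inequality holds,
the derivative is negative. -/
private lemma deriv_neg_aux (c β : ℝ) (hc : 0 < c) (hβ0 : 0 < β) (hβ1 : β < 1)
    (V : ℝ → ℝ)
    (hineq : ∀ t, 0 ≤ t → 0 < V t → deriv V t ≤ V t - c * V t ^ β)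
    (u : ℝ) (hu : 0 ≤ u) (hVu : 0 < V u) (hlt : V u ^ (1 - β) < c) :
    deriv V u < 0 := by
  have h1 : V u ^ β * V u ^ (1 - β) = V u := by
    rw [← Real.rpow_add hVu, add_sub_cancel, Real.rpow_one]
  have h2 : V u - c * V u ^ β = V u ^ β * (V u ^ (1 - β) - c) := by
    rw [mul_sub, h1]; ring
  have h3 : V u ^ β * (V u ^ (1 - β) - c) < 0 :=
    mul_neg_of_pos_of_neg (Real.rpow_pos_of_pos hVu β) (by linarith)
  calc deriv V u ≤ V u - c * V u ^ β := hineq u hu hVu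
    _ < 0 := by rw [h2]; exact h3

/-- Forward invariance: sublevel sets `{V ≤ K}` with `K^(1-β) < c` are forward invariant. -/
private lemma inv_aux (c β : ℝ) (hc : 0 < c) (hβ0 : 0 < β) (hβ1 : β < 1)
    (V : ℝ → ℝ) (hdiff : ∀ t, 0 ≤ t → DifferentiableAt ℝ V t)
    (hnonneg : ∀ t, 0 ≤ t → 0 ≤ V t)
    (hineq : ∀ t, 0 ≤ t → 0 < V t → deriv V t ≤ V t - c * V t ^ β)
    (a K : ℝ) (ha : 0 ≤ a) (hK : 0 ≤ K) (hKc : K ^ (1 - β) < c) (hVa : V a ≤ K) :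
    ∀ t, a ≤ t → V t ≤ K := by
  intro t₁ hat₁
  by_contra hcon
  push_neg at hcon
  set S : Set ℝ := Icc a t₁ ∩ V ⁻¹' (Iic K) with hSdef
  have hVcont : ContinuousOn V (Icc a t₁) := fun x hx =>
    (hdiff x (ha.trans hx.1)).continuousAt.continuousWithinAt
  have hSclosed : IsClosed S :=
    hVcont.preimage_isClosed_of_isClosed isClosed_Icc isClosed_Iic
  have hSne : S.Nonempty := ⟨a, ⟨le_refl a, hat₁⟩, hVa⟩
  have hScompact : IsCompact S :=
    isCompact_Icc.of_isClosed_subset hSclosed inter_subset_left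
  set s := sSup S with hs
  obtain ⟨⟨has, hst₁⟩, hVs⟩ := hScompact.sSup_mem hSne
  have hVsK : V s ≤ K := hVs
  have hslt : s < t₁ :=
    lt_of_le_of_ne hst₁ (fun h => absurd (h ▸ hVsK) (not_le.mpr hcon))
  have hgt : ∀ u ∈ Ioc s t₁, K < V u := by
    intro u hu
    by_contra h
    push_neg at h
    have huS : u ∈ S := ⟨⟨has.trans hu.1.le, hu.2⟩, h⟩
    exact absurd (le_csSup hScompact.bddAbove huS) (not_le.mpr hu.1)
  have hs0 : 0 ≤ s := ha.trans has
  have hcontW : ContinuousAt (fun u => V u ^ (1 - β)) s :=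
    ((hdiff s hs0).continuousAt).rpow_const (Or.inr (by linarith))
  have hWs : V s ^ (1 - β) < c :=
    lt_of_le_of_lt (Real.rpow_le_rpow (hnonneg s hs0) hVsK (by linarith)) hKc
  have hev : ∀ᶠ u in nhds s, V u ^ (1 - β) < c :=
    hcontW.eventually_lt_const hWs
  obtain ⟨δ, hδ, hball⟩ := Metric.eventually_nhds_iff.mp hev
  set δ' := min (δ / 2) (t₁ - s) with hδ'def
  have hδ'pos : 0 < δ' := lt_min (by linarith) (by linarith)
  have hδ'le : δ' ≤ t₁ - s := min_le_right _ _
  have hδ'lt : δ' < δ := lt_of_le_of_lt (min_le_left _ _) (by linarith)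
  have hanti : StrictAntiOn V (Icc s (s + δ')) := by
    apply strictAntiOn_of_deriv_neg (convex_Icc _ _)
      (hVcont.mono (fun x hx => ⟨has.trans hx.1, by linarith [hx.2]⟩))
    intro x hx
    rw [interior_Icc] at hx
    have hxIoc : x ∈ Ioc s t₁ := ⟨hx.1, by linarith [hx.2]⟩
    have hVx : 0 < V x := lt_of_le_of_lt hK (hgt x hxIoc)
    have hWx : V x ^ (1 - β) < c := by
      apply hball
      rw [Real.dist_eq, abs_of_pos (by linarith [hx.1])]
      linarith [hx.2]
    exact deriv_neg_aux c β hc hβ0 hβ1 V hineq x (hs0.trans hx.1.le) hVx hWx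
  have h1 : V (s + δ') < V s :=
    hanti (left_mem_Icc.mpr (by linarith)) (right_mem_Icc.mpr (by linarith))
      (by linarith)
  have h2 : K < V (s + δ') := hgt _ ⟨by linarith, by linarith⟩
  linarith

theorem stmt_1 (c β : ℝ) (hc : 0 < c) (hβ0 : 0 < β) (hβ1 : β < 1)
    (V : ℝ → ℝ) (hdiff : ∀ t, 0 ≤ t → DifferentiableAt ℝ V t)
    (hnonneg : ∀ t, 0 ≤ t → 0 ≤ V t)
    (hineq : ∀ t, 0 ≤ t → 0 < V t → deriv V t ≤ V t - c * V t ^ β)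
    (hinit : V 0 ^ (1 - β) < c) :
    ∃ T : ℝ, 0 ≤ T ∧ ∀ t, T ≤ t → V t = 0 := by
  have hK0 : 0 ≤ V 0 := hnonneg 0 le_rfl
  have hbound : ∀ t, 0 ≤ t → V t ≤ V 0 :=
    inv_aux c β hc hβ0 hβ1 V hdiff hnonneg hineq 0 (V 0) le_rfl hK0 hinit le_rfl
  have hstay : ∀ t₀, 0 ≤ t₀ → V t₀ = 0 → ∀ t, t₀ ≤ t → V t = 0 := by
    intro t₀ ht₀ hV0 t ht
    have h0c : (0 : ℝ) ^ (1 - β) < c := by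
      rw [Real.zero_rpow (by intro h; linarith [sub_eq_zero.mp h] : (1 : ℝ) - β ≠ 0)]
      exact hc
    have := inv_aux c β hc hβ0 hβ1 V hdiff hnonneg hineq t₀ 0 ht₀ le_rfl h0c
      (le_of_eq hV0) t ht
    exact le_antisymm this (hnonneg t (ht₀.trans ht))
  by_cases h0 : V 0 = 0
  · exact ⟨0, le_rfl, fun t ht => hstay 0 le_rfl h0 t ht⟩
  have hV0pos : 0 < V 0 := lt_of_le_of_ne hK0 (Ne.symm h0)
  set ε := c - V 0 ^ (1 - β) with hεdef
  have hεpos : 0 < ε := sub_pos.mpr hinit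
  set m := (1 - β) * ε with hmdef
  have hm : 0 < m := mul_pos (by linarith) hεpos
  set W0 := V 0 ^ (1 - β) with hW0def
  have hW0pos : 0 < W0 := Real.rpow_pos_of_pos hV0pos _
  set T := W0 / m + 1 with hTdef
  have hTpos : 0 < T := by positivity
  have hzero : ∃ t₀ ∈ Icc (0 : ℝ) T, V t₀ = 0 := by
    by_contra hcon
    push_neg at hcon
    have hpos : ∀ u ∈ Icc (0 : ℝ) T, 0 < V u := fun u hu =>
      lt_of_le_of_ne (hnonneg u hu.1) (Ne.symm (hcon u hu))
    have hW : ∀ u ∈ Icc (0 : ℝ) T, HasDerivAt (fun x => V x ^ (1 - β))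
        (deriv V u * (1 - β) * V u ^ (1 - β - 1)) u := fun u hu =>
      ((hdiff u hu.1).hasDerivAt).rpow_const (Or.inl (ne_of_gt (hpos u hu)))
    have hWd : ∀ u ∈ Icc (0 : ℝ) T,
        deriv V u * (1 - β) * V u ^ (1 - β - 1) ≤ -m := by
      intro u hu
      have hVu := hpos u hu
      have hβupos : 0 < V u ^ β := Real.rpow_pos_of_pos hVu β
      have h1 : V u ^ (1 - β) ≤ W0 :=
        Real.rpow_le_rpow hVu.le (hbound u hu.1) (by linarith)
      have h3 : V u ^ β * V u ^ (1 - β) = V u := by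
        rw [← Real.rpow_add hVu, add_sub_cancel, Real.rpow_one]
      have h2 : deriv V u ≤ V u ^ β * (V u ^ (1 - β) - c) := by
        have h := hineq u hu.1 hVu
        nlinarith [h3]
      have h4 : V u ^ β * (V u ^ (1 - β) - c) ≤ V u ^ β * (-ε) := by
        apply mul_le_mul_of_nonneg_left _ hβupos.le
        rw [hεdef]; linarith
      have h5 : V u ^ (1 - β - 1) = (V u ^ β)⁻¹ := by
        rw [show (1 : ℝ) - β - 1 = -β by ring, Real.rpow_neg hVu.le]
      have h6 : deriv V u ≤ -ε * V u ^ β := by nlinarith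
      rw [h5]
      calc deriv V u * (1 - β) * (V u ^ β)⁻¹
          ≤ (-ε * V u ^ β) * (1 - β) * (V u ^ β)⁻¹ := by
            apply mul_le_mul_of_nonneg_right _ (inv_nonneg.mpr hβupos.le)
            exact mul_le_mul_of_nonneg_right h6 (by linarith)
        _ = -m := by
            rw [hmdef]; field_simp
    obtain ⟨ξ, hξ, hslope⟩ := exists_hasDerivAt_eq_slope (fun x => V x ^ (1 - β))
      (fun u => deriv V u * (1 - β) * V u ^ (1 - β - 1)) hTpos
      (fun x hx => ((hW x hx).continuousAt).continuousWithinAt)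
      (fun x hx => hW x (Ioo_subset_Icc_self hx))
    have hξIcc : ξ ∈ Icc (0 : ℝ) T := Ioo_subset_Icc_self hξ
    have hle := hWd ξ hξIcc
    rw [hslope] at hle
    have hWT : 0 ≤ V T ^ (1 - β) := Real.rpow_nonneg (hnonneg T hTpos.le) _
    have hdivle : V T ^ (1 - β) - W0 ≤ -m * T := by
      have h := (div_le_iff₀ hTpos).mp (by simpa using hle)
      linarith [h]
    have hmT : W0 < m * T := by
      have hTm : m * T = W0 + m := by
        rw [hTdef]; field_simp
      rw [hTm]; linarith
    linarith
  obtain ⟨t₀, ht₀, hVt₀⟩ := hzero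
  exact ⟨t₀, ht₀.1, fun t ht => hstay t₀ ht₀.1 hVt₀ t ht⟩
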